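/- Let Xᵏ ∈ F with N(Xᵏ) > 0, let Δₖ > 0, and let αₖ be a minimizer of q(α, Xᵏ) over 0 ≤ α ≤ min{‖D(Xᵏ)‖_F / γ_max(Xᵏ), Δₖ}. Then q(αₖ, Xᵏ) ≤ f(Xᵏ) − (1/2) · min{ N(Xᵏ)² / (M₂ (N(Xᵏ) + (1/2) M₁² n³)), N(Xᵏ)/M₁, Δₖ N(Xᵏ)/√(N(Xᵏ) + (1/2) M₁² n³) }. -/

import Mathlib

set_option autoImplicit false

open Matrix Set Filter

attribute [local instance] Matrix.normedAddCommGroup Matrix.normedSpace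

namespace BoxSDP

open scoped Classical

/-- Trace inner product `⟨A|B⟩ = Trace(Aᵀ B)`. -/
noncomputable def mip {m k : Type*} [Fintype m] [Fintype k]
    (A B : Matrix m k ℝ) : ℝ :=
  (Aᵀ * B).trace

/-- Frobenius norm `‖A‖_F = √⟨A|A⟩`. -/
noncomputable def fnorm {m k : Type*} [Fintype m] [Fintype k]
    (A : Matrix m k ℝ) : ℝ :=
  Real.sqrt (mip A A)

/-- The feasible set `F = {X : O ⪯ X ⪯ I}` (membership forces symmetry). -/
def Feas (n : ℕ) : Set (Matrix (Fin n) (Fin n) ℝ) :=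
  {X | X.PosSemidef ∧ (1 - X).PosSemidef}

/-- Square root of a positive semidefinite matrix (junk value `0` otherwise);
agrees with `A^{1/2} = Q K^{1/2} Qᵀ` on positive semidefinite matrices. -/
noncomputable def psqrt {m : Type*} [Fintype m] [DecidableEq m]
    (A : Matrix m m ℝ) : Matrix m m ℝ :=
  if h : A.PosSemidef then
    (h.1.eigenvectorUnitary : Matrix m m ℝ) * Matrix.diagonal ((↑) ∘ Real.sqrt ∘ h.1.eigenvalues)
      * (star (h.1.eigenvectorUnitary : Matrix m m ℝ))
  else 0

/-- Fourth root `A^{1/4}` of a positive semidefinite matrix. -/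
noncomputable def proot4 {m : Type*} [Fintype m] [DecidableEq m]
    (A : Matrix m m ℝ) : Matrix m m ℝ :=
  psqrt (psqrt A)

/-- The 2-norm of a symmetric matrix: its largest absolute eigenvalue. -/
noncomputable def norm2 {m : Type*} [Fintype m] [DecidableEq m]
    (A : Matrix m m ℝ) : ℝ :=
  if h : A.IsHermitian then sSup (Set.range fun i => |h.eigenvalues i|) else 0

/-- The linear functional `H ↦ ⟨G|H⟩`, as a continuous linear map; a function
`f` has gradient matrix `G` at `X` iff `HasFDerivAt f (gradCLM G) X`. -/
noncomputable def gradCLM {n : ℕ} (G : Matrix (Fin n) (Fin n) ℝ) :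
    Matrix (Fin n) (Fin n) ℝ →L[ℝ] ℝ :=
  LinearMap.toContinuousLinearMap
    { toFun := fun H => mip G H
      map_add' := fun x y => by
        simp [mip, Matrix.mul_add]
      map_smul' := fun c x => by
        simp [mip, Matrix.mul_smul] }

/-- The Hessian bilinear form `⟨A | ∇²f(X) | B⟩` induced by the derivative
`hessOp` of the gradient map. -/
noncomputable def hform {n : ℕ}
    (hessOp : Matrix (Fin n) (Fin n) ℝ →L[ℝ] Matrix (Fin n) (Fin n) ℝ)
    (A B : Matrix (Fin n) (Fin n) ℝ) : ℝ :=
  mip A (hessOp B)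

/-- `underline-f`: the minimum of `⟨G | Y − X̂⟩` over `Y ∈ F`. -/
noncomputable def underf {n : ℕ} (G Xh : Matrix (Fin n) (Fin n) ℝ) : ℝ :=
  sInf ((fun Y => mip G (Y - Xh)) '' Feas n)

/-- First-order optimality condition at `Xs` for gradient matrix `G`. -/
def FirstOrderOpt {n : ℕ} (G Xs : Matrix (Fin n) (Fin n) ℝ) : Prop :=
  ∀ X ∈ Feas n, 0 ≤ mip G (X - Xs)

/-- A fixed eigenvalue decomposition `G = P Γ Pᵀ` of a symmetric matrix `G`,
with eigenvalues in descending order, split into the block `Pp, gp` of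
positive eigenvalues and the block `Pm, gm` of nonpositive eigenvalues. -/
structure SpecDecomp (n : ℕ) (G : Matrix (Fin n) (Fin n) ℝ) where
  np : ℕ
  nm : ℕ
  hdim : np + nm = n
  Pp : Matrix (Fin n) (Fin np) ℝ
  Pm : Matrix (Fin n) (Fin nm) ℝ
  gp : Fin np → ℝ
  gm : Fin nm → ℝ
  hgp_pos : ∀ i, 0 < gp i
  hgm_nonpos : ∀ j, gm j ≤ 0
  hgp_anti : ∀ i j : Fin np, i ≤ j → gp j ≤ gp i
  hgm_anti : ∀ i j : Fin nm, i ≤ j → gm j ≤ gm i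
  hPp_orth : Ppᵀ * Pp = 1
  hPm_orth : Pmᵀ * Pm = 1
  hPpPm : Ppᵀ * Pm = 0
  hPPT : Pp * Ppᵀ + Pm * Pmᵀ = 1
  hG : G = Pp * Matrix.diagonal gp * Ppᵀ + Pm * Matrix.diagonal gm * Pmᵀ

namespace SpecDecomp

variable {n : ℕ} {G : Matrix (Fin n) (Fin n) ℝ}

/-- `V₊(X) = P₊ᵀ X P₊`. -/
def Vp (sd : SpecDecomp n G) (X : Matrix (Fin n) (Fin n) ℝ) :
    Matrix (Fin sd.np) (Fin sd.np) ℝ :=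
  sd.Ppᵀ * X * sd.Pp

/-- `V₋(X) = P₋ᵀ (I − X) P₋`. -/
def Vm (sd : SpecDecomp n G) (X : Matrix (Fin n) (Fin n) ℝ) :
    Matrix (Fin sd.nm) (Fin sd.nm) ℝ :=
  sd.Pmᵀ * (1 - X) * sd.Pm

/-- The search direction `D(X) = P M Pᵀ` with blocks
`M₁₁ = V₊^{1/2} Γ₊ V₊^{1/2}`, `M₁₂ = γ_max P₊ᵀ X P₋`,
`M₂₁ = γ_max P₋ᵀ X P₊`, `M₂₂ = V₋^{1/2} Γ₋ V₋^{1/2}`. -/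
noncomputable def Dmat (sd : SpecDecomp n G) (X : Matrix (Fin n) (Fin n) ℝ) :
    Matrix (Fin n) (Fin n) ℝ :=
  sd.Pp * (psqrt (sd.Vp X) * Matrix.diagonal sd.gp * psqrt (sd.Vp X)) * sd.Ppᵀ
    + norm2 G • (sd.Pp * (sd.Ppᵀ * X * sd.Pm) * sd.Pmᵀ)
    + norm2 G • (sd.Pm * (sd.Pmᵀ * X * sd.Pp) * sd.Ppᵀ)
    + sd.Pm * (psqrt (sd.Vm X) * Matrix.diagonal sd.gm * psqrt (sd.Vm X)) * sd.Pmᵀ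

/-- `N(X) = ⟨G | D(X)⟩`. -/
noncomputable def Nval (sd : SpecDecomp n G) (X : Matrix (Fin n) (Fin n) ℝ) : ℝ :=
  mip G (sd.Dmat X)

end SpecDecomp

section Helpers
open Matrix

variable {m k : Type*} [Fintype m] [Fintype k]

lemma mip_comm (A B : Matrix m k ℝ) : mip A B = mip B A := by
  rw [mip, mip, ← trace_transpose (Aᵀ*B), transpose_mul, transpose_transpose]

lemma mip_add_right (A B C : Matrix m k ℝ) : mip A (B + C) = mip A B + mip A C := by
  simp [mip, Matrix.mul_add]

lemma mip_add_left (A B C : Matrix m k ℝ) : mip (A + B) C = mip A C + mip B C := by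
  simp [mip, Matrix.add_mul]

lemma mip_smul_right (c : ℝ) (A B : Matrix m k ℝ) : mip A (c • B) = c * mip A B := by
  simp [mip, Matrix.mul_smul]

lemma mip_smul_left (c : ℝ) (A B : Matrix m k ℝ) : mip (c • A) B = c * mip A B := by
  simp [mip, Matrix.smul_mul]

lemma mip_zero_right (A : Matrix m k ℝ) : mip A 0 = 0 := by simp [mip]

lemma mip_eq_sum (A B : Matrix m k ℝ) : mip A B = ∑ j, ∑ i, A i j * B i j := by
  simp [mip, Matrix.trace, Matrix.mul_apply, Matrix.diag]

lemma mip_self_nonneg (A : Matrix m k ℝ) : 0 ≤ mip A A := by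
  rw [mip_eq_sum]
  exact Finset.sum_nonneg fun j _ => Finset.sum_nonneg fun i _ => mul_self_nonneg _

lemma mip_self_pos {A : Matrix m k ℝ} (hA : A ≠ 0) : 0 < mip A A := by
  rcases (mip_self_nonneg A).lt_or_eq with h | h
  · exact h
  · exfalso; apply hA
    have h' := h.symm
    rw [mip_eq_sum] at h'
    ext i j
    have h1 := (Finset.sum_eq_zero_iff_of_nonneg (fun j _ => Finset.sum_nonneg
      fun i _ => mul_self_nonneg (A i j))).mp h' j (Finset.mem_univ j)
    have h2 := (Finset.sum_eq_zero_iff_of_nonneg (fun i _ => mul_self_nonneg (A i j))).mp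
      h1 i (Finset.mem_univ i)
    simpa [mul_self_eq_zero] using h2

lemma fnorm_sq {A : Matrix m k ℝ} : fnorm A ^ 2 = mip A A := by
  rw [fnorm, Real.sq_sqrt (mip_self_nonneg A)]

lemma fnorm_pos {A : Matrix m k ℝ} (hA : A ≠ 0) : 0 < fnorm A :=
  Real.sqrt_pos.mpr (mip_self_pos hA)

end Helpers
section PSDHelpers
set_option linter.unusedSectionVars false
open Matrix

variable {m : Type*} [Fintype m] [DecidableEq m]

lemma transpose_eq_of_herm {A : Matrix m m ℝ} (hA : A.IsHermitian) : Aᵀ = A := by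
  rw [← conjTranspose_eq_transpose_of_trivial]; exact hA.eq

open scoped MatrixOrder in
lemma psqrt_eq {A : Matrix m m ℝ} (hA : A.PosSemidef) : psqrt A = CFC.sqrt A := by
  rw [psqrt, dif_pos hA, CFC.sqrt_eq_cfc, cfc_nnreal_eq_real _ A, hA.1.cfc_eq, IsHermitian.cfc,
    Unitary.conjStarAlgAut_apply]
  congr 2
  ext i
  simp [Matrix.diagonal_apply, Real.coe_sqrt, Real.coe_toNNReal', hA.eigenvalues_nonneg]

open scoped MatrixOrder in
lemma psqrt_posSemidef {A : Matrix m m ℝ} (hA : A.PosSemidef) : (psqrt A).PosSemidef := by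
  rw [psqrt_eq hA]; exact (CFC.sqrt_nonneg A).posSemidef

open scoped MatrixOrder in
lemma psqrt_mul_self {A : Matrix m m ℝ} (hA : A.PosSemidef) : psqrt A * psqrt A = A := by
  rw [psqrt_eq hA]; exact CFC.sqrt_mul_sqrt_self A hA.nonneg

lemma psqrt_transpose {A : Matrix m m ℝ} (hA : A.PosSemidef) : (psqrt A)ᵀ = psqrt A :=
  transpose_eq_of_herm (psqrt_posSemidef hA).1

lemma psd_diag_nonneg {A : Matrix m m ℝ} (hA : A.PosSemidef) (i : m) : 0 ≤ A i i := by
  have := hA.dotProduct_mulVec_nonneg (Pi.single i 1)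
  simpa [dotProduct, mulVec, Pi.single_apply] using this

lemma psd_trace_nonneg {A : Matrix m m ℝ} (hA : A.PosSemidef) : 0 ≤ A.trace := by
  rw [Matrix.trace]
  exact Finset.sum_nonneg fun i _ => psd_diag_nonneg hA i

lemma trace_mul_psd_nonneg {A B : Matrix m m ℝ} (hA : A.PosSemidef) (hB : B.PosSemidef) :
    0 ≤ (A * B).trace := by
  have hs := psqrt_posSemidef hA
  have h1 : A * B = psqrt A * (psqrt A * B) := by rw [← mul_assoc, psqrt_mul_self hA]
  rw [h1, trace_mul_comm]
  have h2 : psqrt A * B * psqrt A = (psqrt A)ᴴ * B * psqrt A := by rw [hs.1]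
  have h3 : ((psqrt A)ᴴ * B * psqrt A).PosSemidef := hB.conjTranspose_mul_mul_same _
  rw [h2]
  exact psd_trace_nonneg h3

lemma trace_mul_mono {S V W : Matrix m m ℝ} (hS : S.PosSemidef) (hVW : (W - V).PosSemidef) :
    (S * V).trace ≤ (S * W).trace := by
  have := trace_mul_psd_nonneg hS hVW
  rw [Matrix.mul_sub, trace_sub] at this
  linarith

end PSDHelpers
section SpectralHelpers
set_option linter.unusedSectionVars false
open Matrix

variable {m : Type*} [Fintype m] [DecidableEq m]

lemma spectral_real {W : Matrix m m ℝ} (hW : W.IsHermitian) :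
    W = (hW.eigenvectorUnitary : Matrix m m ℝ) * diagonal hW.eigenvalues *
      star (hW.eigenvectorUnitary : Matrix m m ℝ) := by
  have := hW.spectral_theorem
  rw [Unitary.conjStarAlgAut_apply] at this
  exact this

lemma unitary_star_mul {W : Matrix m m ℝ} (hW : W.IsHermitian) :
    star (hW.eigenvectorUnitary : Matrix m m ℝ) * (hW.eigenvectorUnitary : Matrix m m ℝ) = 1 :=
  Unitary.coe_star_mul_self hW.eigenvectorUnitary

lemma unitary_mul_star {W : Matrix m m ℝ} (hW : W.IsHermitian) :
    (hW.eigenvectorUnitary : Matrix m m ℝ) * star (hW.eigenvectorUnitary : Matrix m m ℝ) = 1 :=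
  Unitary.coe_mul_star_self hW.eigenvectorUnitary

lemma conj_diag_psd {W : Matrix m m ℝ} (hW : W.IsHermitian) {d : m → ℝ} (hd : ∀ i, 0 ≤ d i) :
    PosSemidef ((hW.eigenvectorUnitary : Matrix m m ℝ) * diagonal d *
      star (hW.eigenvectorUnitary : Matrix m m ℝ)) := by
  have h1 : PosSemidef (diagonal d) := PosSemidef.diagonal hd
  have := h1.mul_mul_conjTranspose_same (hW.eigenvectorUnitary : Matrix m m ℝ)
  rwa [← star_eq_conjTranspose] at this

lemma eigenvec_dot_one {W : Matrix m m ℝ} (hW : W.IsHermitian) (i : m) :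
    dotProduct (star ⇑(hW.eigenvectorBasis i)) ⇑(hW.eigenvectorBasis i) = 1 := by
  have h1 : ‖hW.eigenvectorBasis i‖ = 1 := hW.eigenvectorBasis.orthonormal.1 i
  have h2 : (inner ℝ (hW.eigenvectorBasis i) (hW.eigenvectorBasis i) : ℝ) = 1 := by
    rw [real_inner_self_eq_norm_sq, h1]; norm_num
  rw [← h2, EuclideanSpace.inner_eq_star_dotProduct, dotProduct_comm]

lemma quad_eigen_le {W : Matrix m m ℝ} (hW : W.IsHermitian) (i : m) {M : Matrix m m ℝ}
    (hM : (1 - M).PosSemidef) (c : ℝ)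
    (hMv : M *ᵥ ⇑(hW.eigenvectorBasis i) = c • ⇑(hW.eigenvectorBasis i)) : c ≤ 1 := by
  have h := hM.dotProduct_mulVec_nonneg ⇑(hW.eigenvectorBasis i)
  rw [sub_mulVec, one_mulVec, hMv, dotProduct_sub, dotProduct_smul,
    eigenvec_dot_one hW i] at h
  simpa using h
lemma diagonal_sub_fun (d e : m → ℝ) :
    Matrix.diagonal (fun i => d i - e i) = Matrix.diagonal d - Matrix.diagonal e := by
  ext i j
  by_cases h : i = j <;> simp [Matrix.diagonal_apply, h]

lemma conj_diag_eq {W : Matrix m m ℝ} (hW : W.IsHermitian) (d e : m → ℝ) :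
    ((hW.eigenvectorUnitary : Matrix m m ℝ) * diagonal d *
      star (hW.eigenvectorUnitary : Matrix m m ℝ)) *
    ((hW.eigenvectorUnitary : Matrix m m ℝ) * diagonal e *
      star (hW.eigenvectorUnitary : Matrix m m ℝ)) =
    (hW.eigenvectorUnitary : Matrix m m ℝ) * diagonal (fun i => d i * e i) *
      star (hW.eigenvectorUnitary : Matrix m m ℝ) := by
  set U := (hW.eigenvectorUnitary : Matrix m m ℝ)
  have h1 : star U * (U * (diagonal e * star U)) = diagonal e * star U := by
    rw [← mul_assoc, unitary_star_mul hW, one_mul]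
  have h2 : diagonal (fun i => d i * e i) = diagonal d * diagonal e :=
    (diagonal_mul_diagonal d e).symm
  calc U * diagonal d * star U * (U * diagonal e * star U)
      = U * (diagonal d * (star U * (U * (diagonal e * star U)))) := by
        simp only [mul_assoc]
    _ = U * (diagonal d * (diagonal e * star U)) := by rw [h1]
    _ = U * diagonal (fun i => d i * e i) * star U := by
        rw [h2]; simp only [mul_assoc]

lemma mul_self_eigen {W : Matrix m m ℝ} (hW : W.IsHermitian) (i : m) :
    (W * W) *ᵥ ⇑(hW.eigenvectorBasis i) =
      (hW.eigenvalues i * hW.eigenvalues i) • ⇑(hW.eigenvectorBasis i) := by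
  rw [← mulVec_mulVec, hW.mulVec_eigenvectorBasis, mulVec_smul, hW.mulVec_eigenvectorBasis,
    smul_smul]

/-- If `W ⪰ 0` and `W² ⪯ 1` then `W² ⪯ W`. -/
lemma sq_sub_psd {W : Matrix m m ℝ} (hW : W.PosSemidef) (h1 : (1 - W * W).PosSemidef) :
    (W - W * W).PosSemidef := by
  set U := (hW.1.eigenvectorUnitary : Matrix m m ℝ) with hU
  set kf := hW.1.eigenvalues with hkf
  have hle : ∀ i, kf i ≤ 1 := by
    intro i
    have hsq := quad_eigen_le hW.1 i h1 _ (mul_self_eigen hW.1 i)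
    nlinarith [hW.eigenvalues_nonneg i]
  have h0 : W = U * diagonal kf * star U := spectral_real hW.1
  have hW2 : W * W = U * diagonal (fun i => kf i * kf i) * star U := by
    conv_lhs => rw [h0]
    rw [conj_diag_eq]
  have hkey : U * diagonal (fun i => kf i - kf i * kf i) * star U = W - W * W := by
    rw [diagonal_sub_fun, Matrix.mul_sub, Matrix.sub_mul, ← h0, ← hW2]
  rw [← hkey]
  exact conj_diag_psd hW.1 fun i => by nlinarith [hW.eigenvalues_nonneg i, hle i]

/-- If `0 ⪯ W ⪯ 1` then `W² ⪯ 1`. -/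
lemma one_sub_sq_psd {W : Matrix m m ℝ} (hW : W.PosSemidef) (h1 : (1 - W).PosSemidef) :
    (1 - W * W).PosSemidef := by
  set U := (hW.1.eigenvectorUnitary : Matrix m m ℝ) with hU
  set kf := hW.1.eigenvalues with hkf
  have hle : ∀ i, kf i ≤ 1 := fun i =>
    quad_eigen_le hW.1 i h1 _ (hW.1.mulVec_eigenvectorBasis i)
  have h0 : W = U * diagonal kf * star U := spectral_real hW.1
  have hW2 : W * W = U * diagonal (fun i => kf i * kf i) * star U := by
    conv_lhs => rw [h0]
    rw [conj_diag_eq]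
  have hone : (1 : Matrix m m ℝ) = U * Matrix.diagonal (fun _ => (1:ℝ)) * star U := by
    rw [diagonal_one, mul_one, unitary_mul_star hW.1]
  have hkey : U * diagonal (fun i => 1 - kf i * kf i) * star U = 1 - W * W := by
    rw [diagonal_sub_fun, Matrix.mul_sub, Matrix.sub_mul, ← hW2, ← hone]
  rw [← hkey]
  exact conj_diag_psd hW.1 fun i => by nlinarith [hW.eigenvalues_nonneg i, hle i]

lemma norm2_nonneg (W : Matrix m m ℝ) : 0 ≤ norm2 W := by
  rw [norm2]
  by_cases h : W.IsHermitian
  · rw [dif_pos h]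
    rcases isEmpty_or_nonempty m with he | he
    · simp [Set.range_eq_empty, Real.sSup_empty]
    · inhabit m
      exact le_trans (abs_nonneg (h.eigenvalues default))
        (le_csSup (Set.finite_range _).bddAbove ⟨default, rfl⟩)
  · rw [dif_neg h]

lemma abs_eigenvalue_le_norm2 {W : Matrix m m ℝ} (h : W.IsHermitian) (i : m) :
    |h.eigenvalues i| ≤ norm2 W := by
  rw [norm2, dif_pos h]
  exact le_csSup (Set.finite_range _).bddAbove ⟨i, rfl⟩

lemma eq_zero_of_norm2_eq_zero {W : Matrix m m ℝ} (h : W.IsHermitian) (h0 : norm2 W = 0) :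
    W = 0 := by
  have hk : h.eigenvalues = fun _ => 0 := by
    funext i
    have := abs_eigenvalue_le_norm2 h i
    rw [h0] at this
    exact abs_eq_zero.mp (le_antisymm this (abs_nonneg _))
  have h1 := spectral_real h
  rw [hk] at h1
  simpa using h1
lemma diag_psd_conj {p : ℕ} {V : Matrix (Fin p) (Fin p) ℝ} (hV : V.PosSemidef) (g : Fin p → ℝ) :
    (Matrix.diagonal g * V * Matrix.diagonal g).PosSemidef := by
  have h := hV.conjTranspose_mul_mul_same (Matrix.diagonal g)
  rwa [conjTranspose_eq_transpose_of_trivial, diagonal_transpose] at h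

lemma core_ineq {p : ℕ} {V : Matrix (Fin p) (Fin p) ℝ} (hV : V.PosSemidef)
    (h1 : (1 - V).PosSemidef) (g : Fin p → ℝ) :
    ((psqrt V * Matrix.diagonal g * psqrt V)ᵀ * (psqrt V * Matrix.diagonal g * psqrt V)).trace
      ≤ (Matrix.diagonal g * (psqrt V * Matrix.diagonal g * psqrt V)).trace := by
  set W := psqrt V with hWdef
  set Γ := Matrix.diagonal g with hΓ
  have hWpsd : W.PosSemidef := psqrt_posSemidef hV
  have hWW : W * W = V := psqrt_mul_self hV
  have hWt : Wᵀ = W := psqrt_transpose hV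
  have hΓt : Γᵀ = Γ := diagonal_transpose g
  have hVW : (W - V).PosSemidef := by
    have := sq_sub_psd hWpsd (by rwa [hWW])
    rwa [hWW] at this
  have hAt : (W * Γ * W)ᵀ = W * Γ * W := by
    rw [transpose_mul, transpose_mul, hWt, hΓt, Matrix.mul_assoc]
  have e1 : ((W * Γ * W)ᵀ * (W * Γ * W)).trace = ((Γ * V * Γ) * V).trace := by
    rw [hAt]
    rw [show W * Γ * W * (W * Γ * W) = W * (Γ * V * Γ * W) by
      simp only [Matrix.mul_assoc, hWW]
      rw [← Matrix.mul_assoc W W, hWW]]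
    rw [trace_mul_comm W, Matrix.mul_assoc (Γ * V * Γ) W W, hWW]
  have e2 : ((Γ * V * Γ) * W).trace = ((Γ * W * Γ) * V).trace := by
    rw [show Γ * V * Γ * W = Γ * V * (Γ * W) by simp only [Matrix.mul_assoc],
      trace_mul_comm (Γ * V) (Γ * W),
      show Γ * W * (Γ * V) = Γ * W * Γ * V by simp only [Matrix.mul_assoc]]
  have e3 : ((Γ * W * Γ) * W).trace = (Γ * (W * Γ * W)).trace := by
    simp only [Matrix.mul_assoc]
  have s1 : ((Γ * V * Γ) * V).trace ≤ ((Γ * V * Γ) * W).trace :=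
    trace_mul_mono (diag_psd_conj hV g) hVW
  have s2 : ((Γ * W * Γ) * V).trace ≤ ((Γ * W * Γ) * W).trace :=
    trace_mul_mono (diag_psd_conj hWpsd g) hVW
  rw [e1]
  calc ((Γ * V * Γ) * V).trace ≤ ((Γ * V * Γ) * W).trace := s1
    _ = ((Γ * W * Γ) * V).trace := e2
    _ ≤ ((Γ * W * Γ) * W).trace := s2
    _ = (Γ * (W * Γ * W)).trace := e3
lemma psd_mul_transpose {n p : ℕ} (Q : Matrix (Fin n) (Fin p) ℝ) : (Q * Qᵀ).PosSemidef := by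
  have h := (Matrix.PosSemidef.one (n := Fin p) (R := ℝ)).mul_mul_conjTranspose_same Q
  rwa [Matrix.mul_one, conjTranspose_eq_transpose_of_trivial] at h

lemma psd_conj_symm {n : ℕ} {M X : Matrix (Fin n) (Fin n) ℝ} (hM : M.PosSemidef)
    (hXt : Xᵀ = X) : (X * M * X).PosSemidef := by
  have h := hM.conjTranspose_mul_mul_same X
  rwa [conjTranspose_eq_transpose_of_trivial, hXt] at h

lemma cross_half {n p q : ℕ} {X : Matrix (Fin n) (Fin n) ℝ} (hX : X.PosSemidef)
    (hXX1 : (1 - X * X).PosSemidef)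
    (P : Matrix (Fin n) (Fin p) ℝ) (Q : Matrix (Fin n) (Fin q) ℝ)
    (hQ : Qᵀ * Q = 1) (hPP1 : (1 - P * Pᵀ).PosSemidef) :
    ((Pᵀ * X * Q) * (Pᵀ * X * Q)ᵀ).trace ≤ (q : ℝ) := by
  have hXt : Xᵀ = X := transpose_eq_of_herm hX.1
  have hBt : (Pᵀ * X * Q)ᵀ = Qᵀ * X * P := by
    simp [Matrix.transpose_mul, hXt, Matrix.mul_assoc]
  have e1 : ((Pᵀ * X * Q) * (Qᵀ * X * P)).trace
      = ((X * (Q * Qᵀ) * X) * (P * Pᵀ)).trace := by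
    rw [show Pᵀ * X * Q * (Qᵀ * X * P) = Pᵀ * (X * (Q * Qᵀ) * X * P) by
      simp only [Matrix.mul_assoc]]
    rw [trace_mul_comm]
    rw [show X * (Q * Qᵀ) * X * P * Pᵀ = X * (Q * Qᵀ) * X * (P * Pᵀ) by
      simp only [Matrix.mul_assoc]]
  have hS1 : (X * (Q * Qᵀ) * X).PosSemidef := psd_conj_symm (psd_mul_transpose Q) hXt
  have s1 : ((X * (Q * Qᵀ) * X) * (P * Pᵀ)).trace ≤ ((X * (Q * Qᵀ) * X) * 1).trace :=
    trace_mul_mono hS1 hPP1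
  have e2 : ((X * (Q * Qᵀ) * X) * 1).trace = ((Q * Qᵀ) * (X * X)).trace := by
    rw [Matrix.mul_one]
    rw [show X * (Q * Qᵀ) * X = X * ((Q * Qᵀ) * X) by simp only [Matrix.mul_assoc]]
    rw [trace_mul_comm X]
    rw [show Q * Qᵀ * X * X = Q * Qᵀ * (X * X) by simp only [Matrix.mul_assoc]]
  have s2 : ((Q * Qᵀ) * (X * X)).trace ≤ ((Q * Qᵀ) * 1).trace :=
    trace_mul_mono (psd_mul_transpose Q) hXX1
  have e3 : ((Q * Qᵀ) * 1).trace = (q : ℝ) := by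
    rw [Matrix.mul_one, trace_mul_comm, hQ, trace_one]
    simp
  rw [hBt]
  calc ((Pᵀ * X * Q) * (Qᵀ * X * P)).trace
      = ((X * (Q * Qᵀ) * X) * (P * Pᵀ)).trace := e1
    _ ≤ ((X * (Q * Qᵀ) * X) * 1).trace := s1
    _ = ((Q * Qᵀ) * (X * X)).trace := e2
    _ ≤ ((Q * Qᵀ) * 1).trace := s2
    _ = (q : ℝ) := e3

lemma cross_bound {n p q : ℕ} {X : Matrix (Fin n) (Fin n) ℝ} (hX : X.PosSemidef)
    (hX1 : (1 - X).PosSemidef)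
    (P : Matrix (Fin n) (Fin p) ℝ) (Q : Matrix (Fin n) (Fin q) ℝ)
    (hP : Pᵀ * P = 1) (hQ : Qᵀ * Q = 1) (hPQ : P * Pᵀ + Q * Qᵀ = 1) :
    ((Pᵀ * X * Q)ᵀ * (Pᵀ * X * Q)).trace ≤ (min p q : ℕ) := by
  have hXt : Xᵀ = X := transpose_eq_of_herm hX.1
  have hXX1 : (1 - X * X).PosSemidef := one_sub_sq_psd hX hX1
  have hPP1 : (1 - P * Pᵀ).PosSemidef := by
    rw [show (1 : Matrix (Fin n) (Fin n) ℝ) - P * Pᵀ = Q * Qᵀ by rw [← hPQ]; abel]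
    exact psd_mul_transpose Q
  have hQQ1 : (1 - Q * Qᵀ).PosSemidef := by
    rw [show (1 : Matrix (Fin n) (Fin n) ℝ) - Q * Qᵀ = P * Pᵀ by rw [← hPQ]; abel]
    exact psd_mul_transpose P
  have hBt : (Pᵀ * X * Q)ᵀ = Qᵀ * X * P := by
    simp [Matrix.transpose_mul, hXt, Matrix.mul_assoc]
  have h1 : ((Pᵀ * X * Q)ᵀ * (Pᵀ * X * Q)).trace ≤ (q : ℝ) := by
    rw [trace_mul_comm]
    exact cross_half hX hXX1 P Q hQ hPP1
  have h2 : ((Pᵀ * X * Q)ᵀ * (Pᵀ * X * Q)).trace ≤ (p : ℝ) := by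
    have hBt2 : (Qᵀ * X * P)ᵀ = Pᵀ * X * Q := by
      simp [Matrix.transpose_mul, hXt, Matrix.mul_assoc]
    have := cross_half hX hXX1 Q P hP hQQ1
    rw [hBt2] at this
    rw [hBt]
    exact this
  rcases le_total p q with hpq | hpq
  · rw [min_eq_left hpq]; exact h2
  · rw [min_eq_right hpq]; exact h1
lemma mip_quad {n a b c d : Type*} [Fintype n] [Fintype a] [Fintype b] [Fintype c] [Fintype d]
    (P : Matrix n a ℝ) (R : Matrix n b ℝ) (P' : Matrix n c ℝ) (R' : Matrix n d ℝ)
    (A : Matrix a b ℝ) (B : Matrix c d ℝ) :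
    mip (P * A * Rᵀ) (P' * B * R'ᵀ) = (Aᵀ * (Pᵀ * P') * B * (R'ᵀ * R)).trace := by
  rw [mip]
  rw [show (P * A * Rᵀ)ᵀ = R * (Aᵀ * Pᵀ) by
    simp [Matrix.transpose_mul, Matrix.mul_assoc]]
  rw [show R * (Aᵀ * Pᵀ) * (P' * B * R'ᵀ) = R * (Aᵀ * Pᵀ * (P' * B * R'ᵀ)) by
    simp only [Matrix.mul_assoc]]
  rw [trace_mul_comm R]
  congr 1
  simp only [Matrix.mul_assoc]

end SpectralHelpers

section DmatFacts
open Matrix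

variable {n : ℕ} {G : Matrix (Fin n) (Fin n) ℝ} (sd : SpecDecomp n G)
  {X : Matrix (Fin n) (Fin n) ℝ}

lemma SpecDecomp.hQP : sd.Pmᵀ * sd.Pp = 0 := by
  have := congrArg Matrix.transpose sd.hPpPm
  simpa [Matrix.transpose_mul] using this

lemma SpecDecomp.Vp_psd (hX : X ∈ Feas n) : (sd.Vp X).PosSemidef := by
  have h := hX.1.conjTranspose_mul_mul_same sd.Pp
  rwa [conjTranspose_eq_transpose_of_trivial] at h

lemma SpecDecomp.Vp_le_one (hX : X ∈ Feas n) : (1 - sd.Vp X).PosSemidef := by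
  have h := hX.2.conjTranspose_mul_mul_same sd.Pp
  rw [conjTranspose_eq_transpose_of_trivial] at h
  have e : sd.Ppᵀ * (1 - X) * sd.Pp = 1 - sd.Vp X := by
    rw [Matrix.mul_sub, Matrix.mul_one, Matrix.sub_mul, sd.hPp_orth, SpecDecomp.Vp]
  rwa [e] at h

lemma SpecDecomp.Vm_psd (hX : X ∈ Feas n) : (sd.Vm X).PosSemidef := by
  have h := hX.2.conjTranspose_mul_mul_same sd.Pm
  rwa [conjTranspose_eq_transpose_of_trivial] at h

lemma SpecDecomp.Vm_le_one (hX : X ∈ Feas n) : (1 - sd.Vm X).PosSemidef := by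
  have h := hX.1.conjTranspose_mul_mul_same sd.Pm
  rw [conjTranspose_eq_transpose_of_trivial] at h
  have e : sd.Pmᵀ * X * sd.Pm = 1 - sd.Vm X := by
    rw [SpecDecomp.Vm, Matrix.mul_sub, Matrix.mul_one, Matrix.sub_mul, sd.hPm_orth]
    abel
  rwa [e] at h

lemma SpecDecomp.Dmat_mip_le (hX : X ∈ Feas n) :
    mip (sd.Dmat X) (sd.Dmat X) ≤ sd.Nval X + 2 * norm2 G ^ 2 * ((min sd.np sd.nm : ℕ) : ℝ) := by
  have hQP := sd.hQP
  have hVp := sd.Vp_psd hX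
  have hVp1 := sd.Vp_le_one hX
  have hVm := sd.Vm_psd hX
  have hVm1 := sd.Vm_le_one hX
  have expand : mip (sd.Dmat X) (sd.Dmat X) =
      ((psqrt (sd.Vp X) * Matrix.diagonal sd.gp * psqrt (sd.Vp X))ᵀ *
        (psqrt (sd.Vp X) * Matrix.diagonal sd.gp * psqrt (sd.Vp X))).trace
    + norm2 G ^ 2 * ((sd.Ppᵀ * X * sd.Pm)ᵀ * (sd.Ppᵀ * X * sd.Pm)).trace
    + norm2 G ^ 2 * ((sd.Pmᵀ * X * sd.Pp)ᵀ * (sd.Pmᵀ * X * sd.Pp)).trace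
    + ((psqrt (sd.Vm X) * Matrix.diagonal sd.gm * psqrt (sd.Vm X))ᵀ *
        (psqrt (sd.Vm X) * Matrix.diagonal sd.gm * psqrt (sd.Vm X))).trace := by
    rw [SpecDecomp.Dmat]
    simp only [mip_add_left, mip_add_right, mip_smul_left, mip_smul_right, mip_quad,
      sd.hPp_orth, sd.hPm_orth, sd.hPpPm, hQP, Matrix.mul_one, Matrix.one_mul,
      Matrix.mul_zero, Matrix.zero_mul, trace_zero, mul_zero, add_zero, zero_add]
    ring
  have expandN : sd.Nval X =
      (Matrix.diagonal sd.gp *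
        (psqrt (sd.Vp X) * Matrix.diagonal sd.gp * psqrt (sd.Vp X))).trace
    + (Matrix.diagonal sd.gm *
        (psqrt (sd.Vm X) * Matrix.diagonal sd.gm * psqrt (sd.Vm X))).trace := by
    rw [SpecDecomp.Nval]
    rw [show mip G (sd.Dmat X) = mip (sd.Pp * Matrix.diagonal sd.gp * sd.Ppᵀ
        + sd.Pm * Matrix.diagonal sd.gm * sd.Pmᵀ) (sd.Dmat X) from by rw [← sd.hG]]
    rw [SpecDecomp.Dmat]
    simp only [mip_add_left, mip_add_right, mip_smul_right, mip_quad,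
      sd.hPp_orth, sd.hPm_orth, sd.hPpPm, hQP, Matrix.mul_one, Matrix.one_mul,
      Matrix.mul_zero, Matrix.zero_mul, trace_zero, mul_zero, add_zero, zero_add,
      Matrix.diagonal_transpose]
  have ineq1 := core_ineq hVp hVp1 sd.gp
  have ineq4 := core_ineq hVm hVm1 sd.gm
  have crossp := cross_bound hX.1 hX.2 sd.Pp sd.Pm sd.hPp_orth sd.hPm_orth sd.hPPT
  have hPQsum' : sd.Pm * sd.Pmᵀ + sd.Pp * sd.Ppᵀ = 1 := by rw [← sd.hPPT]; abel
  have crossm := cross_bound hX.1 hX.2 sd.Pm sd.Pp sd.hPm_orth sd.hPp_orth hPQsum'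
  have hγ2 : (0:ℝ) ≤ norm2 G ^ 2 := sq_nonneg _
  have hc1 := mul_le_mul_of_nonneg_left crossp hγ2
  have hc2 := mul_le_mul_of_nonneg_left crossm hγ2
  have hmincast : ((min sd.nm sd.np : ℕ) : ℝ) = ((min sd.np sd.nm : ℕ) : ℝ) := by
    rw [Nat.min_comm]
  rw [hmincast] at hc2
  rw [expand, expandN]
  linarith

lemma SpecDecomp.Dmat_isSymm (hX : X ∈ Feas n) : (sd.Dmat X).IsSymm := by
  have hXt : Xᵀ = X := transpose_eq_of_herm hX.1.1
  have hWp := psqrt_transpose (sd.Vp_psd hX)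
  have hWm := psqrt_transpose (sd.Vm_psd hX)
  rw [Matrix.IsSymm, SpecDecomp.Dmat]
  simp only [Matrix.transpose_add, Matrix.transpose_smul, Matrix.transpose_mul,
    Matrix.transpose_transpose, hWp, hWm, Matrix.diagonal_transpose, hXt, Matrix.mul_assoc]
  abel

end DmatFacts

lemma cauchy_scalar {g h M R : ℝ} (hg : 0 < g) (hR : 0 < R) (hM : 0 < M) (hh : |h| ≤ M) :
    ∃ a ∈ Set.Icc (0:ℝ) R, -(a * g) + a ^ 2 / 2 * h ≤ -(1/2 * min (g^2/M) (g*R)) := by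
  have hhM : h ≤ M := le_trans (le_abs_self h) hh
  rcases le_or_gt h 0 with hh0 | hh0
  · refine ⟨R, ⟨le_of_lt hR, le_refl R⟩, ?_⟩
    have h1 : min (g^2/M) (g*R) ≤ g*R := min_le_right _ _
    have h2 : R ^ 2 / 2 * h ≤ 0 := by
      apply mul_nonpos_of_nonneg_of_nonpos _ hh0
      positivity
    nlinarith
  · rcases le_or_gt (g/h) R with hgh | hgh
    · refine ⟨g/h, ⟨by positivity, hgh⟩, ?_⟩
      have hval : -(g/h * g) + (g/h) ^ 2 / 2 * h = -(g^2/(2*h)) := by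
        field_simp
        ring
      rw [hval]
      have h1 : min (g^2/M) (g*R) ≤ g^2/M := min_le_left _ _
      have h2 : g^2/M ≤ g^2/h := by gcongr
      have h3 : g^2/(2*h) = (g^2/h)/2 := by ring
      linarith
    · refine ⟨R, ⟨le_of_lt hR, le_refl R⟩, ?_⟩
      have hRh : R * h < g := (lt_div_iff₀ hh0).mp hgh
      have h1 : min (g^2/M) (g*R) ≤ g*R := min_le_right _ _
      nlinarith [mul_le_mul_of_nonneg_left hRh.le hR.le]

lemma mip_zero_left {m k : Type*} [Fintype m] [Fintype k] (A : Matrix m k ℝ) :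
    mip 0 A = 0 := by simp [mip]


set_option maxHeartbeats 1000000

theorem q_decrease_bound' {n : ℕ}
    (f : Matrix (Fin n) (Fin n) ℝ → ℝ)
    (grad : Matrix (Fin n) (Fin n) ℝ → Matrix (Fin n) (Fin n) ℝ)
    (hgradsym : ∀ X ∈ Feas n, (grad X).IsSymm)
    (hgrad : ∀ X ∈ Feas n, HasFDerivAt f (gradCLM (grad X)) X)
    (hessOp : Matrix (Fin n) (Fin n) ℝ →
      Matrix (Fin n) (Fin n) ℝ →L[ℝ] Matrix (Fin n) (Fin n) ℝ)
    (hhess : ∀ X ∈ Feas n, HasFDerivAt grad (hessOp X) X)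
    (M₁ M₂ : ℝ)
    (hM1 : IsGreatest {r : ℝ | ∃ X ∈ Feas n, r = norm2 (grad X)} M₁)
    (hM2 : IsGreatest {r : ℝ | ∃ X ∈ Feas n, ∃ D : Matrix (Fin n) (Fin n) ℝ,
      D.IsSymm ∧ D ≠ 0 ∧ r = |hform (hessOp X) D D| / mip D D} M₂)
    (hM1pos : 0 < M₁) (hM2pos : 0 < M₂)
    (Xk : Matrix (Fin n) (Fin n) ℝ) (hXk : Xk ∈ Feas n)
    (sd : SpecDecomp n (grad Xk))
    (hN : 0 < sd.Nval Xk)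
    (Δk : ℝ) (hΔk : 0 < Δk)
    (S : Matrix (Fin n) (Fin n) ℝ)
    (hS : S = (fnorm (sd.Dmat Xk))⁻¹ • sd.Dmat Xk)
    (q : ℝ → ℝ)
    (hq : ∀ a : ℝ, q a = f Xk - a * mip (grad Xk) S
        + a ^ 2 / 2 * hform (hessOp Xk) S S)
    (αk : ℝ)
    (hαmem : αk ∈ Set.Icc 0 (min (fnorm (sd.Dmat Xk) / norm2 (grad Xk)) Δk))
    (hαmin : ∀ a ∈ Set.Icc 0 (min (fnorm (sd.Dmat Xk) / norm2 (grad Xk)) Δk),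
      q αk ≤ q a) :
    q αk ≤ f Xk - (1 / 2) * min (min
        (sd.Nval Xk ^ 2 / (M₂ * (sd.Nval Xk + (1 / 2) * M₁ ^ 2 * (n : ℝ) ^ 3)))
        (sd.Nval Xk / M₁))
        (Δk * sd.Nval Xk / Real.sqrt (sd.Nval Xk + (1 / 2) * M₁ ^ 2 * (n : ℝ) ^ 3)) := by
  classical
  set D := sd.Dmat Xk with hDdef
  set Nv := sd.Nval Xk with hNdef
  set γ := norm2 (grad Xk) with hγdef
  set d := fnorm D with hddef
  have hNvD : Nv = mip (grad Xk) D := rfl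
  have hGsym : (grad Xk).IsSymm := hgradsym Xk hXk
  have hGherm : (grad Xk).IsHermitian := by
    rw [Matrix.IsHermitian, conjTranspose_eq_transpose_of_trivial]
    exact hGsym
  have hDne : D ≠ 0 := by
    intro h0
    rw [hNvD, h0, mip_zero_right] at hN
    exact lt_irrefl 0 hN
  have hdpos : 0 < d := fnorm_pos hDne
  have hd2 : d ^ 2 = mip D D := fnorm_sq
  have hγle : γ ≤ M₁ := hM1.2 ⟨Xk, hXk, rfl⟩
  have hγnonneg : 0 ≤ γ := norm2_nonneg _
  have hγpos : 0 < γ := by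
    rcases hγnonneg.lt_or_eq with h | h
    · exact h
    · exfalso
      have hG0 : grad Xk = 0 := eq_zero_of_norm2_eq_zero hGherm h.symm
      rw [hNvD, hG0, mip_zero_left] at hN
      exact lt_irrefl 0 hN
  -- Hessian bound on the normalized direction
  have hDsymm : D.IsSymm := sd.Dmat_isSymm hXk
  have hMD : |hform (hessOp Xk) D D| / mip D D ≤ M₂ := hM2.2 ⟨Xk, hXk, D, hDsymm, hDne, rfl⟩
  have hmipDD : 0 < mip D D := mip_self_pos hDne
  have hMD' : |hform (hessOp Xk) D D| ≤ M₂ * mip D D := by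
    rw [div_le_iff₀ hmipDD] at hMD
    linarith [hMD]
  have hhS : hform (hessOp Xk) S S = d⁻¹ * (d⁻¹ * hform (hessOp Xk) D D) := by
    rw [hS]
    simp only [hform]
    rw [(hessOp Xk).map_smul, mip_smul_left, mip_smul_right]
  have habs : |hform (hessOp Xk) S S| ≤ M₂ := by
    rw [hhS, abs_mul, abs_mul, abs_of_nonneg (inv_nonneg.mpr hdpos.le)]
    have hdne : d ≠ 0 := ne_of_gt hdpos
    have hd2' : d⁻¹ * (d⁻¹ * (M₂ * mip D D)) = M₂ := by
      rw [← hd2, pow_two]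
      field_simp
    have h2 := mul_le_mul_of_nonneg_left hMD' (inv_nonneg.mpr hdpos.le)
    have h3 := mul_le_mul_of_nonneg_left h2 (inv_nonneg.mpr hdpos.le)
    calc d⁻¹ * (d⁻¹ * |hform (hessOp Xk) D D|)
        ≤ d⁻¹ * (d⁻¹ * (M₂ * mip D D)) := h3
      _ = M₂ := hd2'
  have hgS : mip (grad Xk) S = d⁻¹ * Nv := by
    rw [hS, mip_smul_right, ← hNvD]
  have hgpos : 0 < d⁻¹ * Nv := mul_pos (inv_pos.mpr hdpos) hN
  -- bound on ‖D‖²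
  have hDD := sd.Dmat_mip_le hXk
  rw [← hDdef, ← hNdef, ← hγdef] at hDD
  have hcross : 2 * γ ^ 2 * ((min sd.np sd.nm : ℕ) : ℝ) ≤ 1/2 * M₁ ^ 2 * (n : ℝ) ^ 3 := by
    have hdim := sd.hdim
    rcases Nat.lt_or_ge n 2 with hn | hn
    · have hmin0 : min sd.np sd.nm = 0 := by omega
      rw [hmin0]
      have : (0:ℝ) ≤ 1/2 * M₁ ^ 2 * (n : ℝ) ^ 3 := by positivity
      simpa using this
    · have hn2 : (2:ℝ) ≤ (n:ℝ) := by exact_mod_cast hn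
      have hmin2 : 2 * ((min sd.np sd.nm : ℕ) : ℝ) ≤ (n : ℝ) := by
        have : 2 * min sd.np sd.nm ≤ n := by omega
        exact_mod_cast this
      have hγ2 : γ ^ 2 ≤ M₁ ^ 2 := by nlinarith
      have hn0 : (0:ℝ) ≤ (n:ℝ) := by positivity
      have h4 : (4:ℝ) ≤ (n:ℝ) * (n:ℝ) := by nlinarith
      have hcube : 2 * (n:ℝ) ≤ (n:ℝ) ^ 3 := by
        nlinarith [mul_le_mul_of_nonneg_left h4 hn0]
      have s1 : 2 * γ ^ 2 * ((min sd.np sd.nm : ℕ) : ℝ)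
          = γ ^ 2 * (2 * ((min sd.np sd.nm : ℕ) : ℝ)) := by ring
      have s2 : γ ^ 2 * (2 * ((min sd.np sd.nm : ℕ) : ℝ)) ≤ γ ^ 2 * (n:ℝ) :=
        mul_le_mul_of_nonneg_left hmin2 (sq_nonneg γ)
      have s3 : γ ^ 2 * (n:ℝ) ≤ M₁ ^ 2 * (n:ℝ) :=
        mul_le_mul_of_nonneg_right hγ2 hn0
      have s4 : M₁ ^ 2 * (2 * (n:ℝ)) ≤ M₁ ^ 2 * (n:ℝ) ^ 3 :=
        mul_le_mul_of_nonneg_left hcube (sq_nonneg M₁)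
      linarith
  have hB0 : mip D D ≤ Nv + 1/2 * M₁ ^ 2 * (n : ℝ) ^ 3 := by linarith
  have hB0pos : (0:ℝ) < Nv + 1/2 * M₁ ^ 2 * (n : ℝ) ^ 3 := by positivity
  have hdle : d ≤ Real.sqrt (Nv + 1/2 * M₁ ^ 2 * (n : ℝ) ^ 3) := by
    rw [hddef, fnorm]
    exact Real.sqrt_le_sqrt (by linarith)
  have hsqrtpos : (0:ℝ) < Real.sqrt (Nv + 1/2 * M₁ ^ 2 * (n : ℝ) ^ 3) :=
    Real.sqrt_pos.mpr hB0pos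
  -- apply the scalar lemma
  have hRpos : 0 < min (d / γ) Δk := lt_min (div_pos hdpos hγpos) hΔk
  obtain ⟨a, ha, hval⟩ := cauchy_scalar hgpos hRpos hM2pos habs
  have hqa := hαmin a ha
  rw [hq a] at hqa
  rw [hgS] at hqa
  -- compare the two mins
  set g := d⁻¹ * Nv with hgdef
  set t1 := Nv ^ 2 / (M₂ * (Nv + 1/2 * M₁ ^ 2 * (n : ℝ) ^ 3)) with ht1
  set t2 := Nv / M₁ with ht2
  set t3 := Δk * Nv / Real.sqrt (Nv + 1/2 * M₁ ^ 2 * (n : ℝ) ^ 3) with ht3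
  have key : min (min t1 t2) t3 ≤ min (g^2/M₂) (g * min (d / γ) Δk) := by
    apply le_min
    · -- ≤ g²/M₂
      have e1 : g^2/M₂ = Nv^2/(M₂ * d^2) := by
        rw [hgdef]
        field_simp
      have e2 : t1 ≤ Nv^2/(M₂ * d^2) := by
        rw [ht1]
        gcongr
        linarith
      calc min (min t1 t2) t3 ≤ min t1 t2 := min_le_left _ _
        _ ≤ t1 := min_le_left _ _
        _ ≤ Nv^2/(M₂ * d^2) := e2
        _ = g^2/M₂ := e1.symm
    · rcases min_cases (d / γ) Δk with ⟨hmin, _⟩ | ⟨hmin, _⟩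
      · rw [hmin]
        have e1 : g * (d / γ) = Nv / γ := by
          rw [hgdef]
          field_simp
        have e2 : t2 ≤ Nv / γ := by
          rw [ht2]
          gcongr
        calc min (min t1 t2) t3 ≤ min t1 t2 := min_le_left _ _
          _ ≤ t2 := min_le_right _ _
          _ ≤ Nv / γ := e2
          _ = g * (d / γ) := e1.symm
      · rw [hmin]
        have e1 : g * Δk = Δk * Nv / d := by
          rw [hgdef]
          field_simp
        have e2 : t3 ≤ Δk * Nv / d := by
          rw [ht3]
          gcongr
        calc min (min t1 t2) t3 ≤ t3 := min_le_right _ _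
          _ ≤ Δk * Nv / d := e2
          _ = g * Δk := e1.symm
  have final : 1/2 * min (min t1 t2) t3 ≤ 1/2 * min (g^2/M₂) (g * min (d / γ) Δk) := by
    linarith [key]
  linarith [hqa, hval, final]

end BoxSDP
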